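/- Let G=(N,A,c) be a strongly connected directed graph where all arc costs are nonnegative and each cycle through any fixed arc e of cost c(e) > 0 can be chosen with all arcs of cost at most 7n²·c(e) (i.e., c is 7n²-min-balanced). If c^π is any nonnegative reduced cost of c, then for every arc e, c^π(e) ≤ 7n³·c(e), where n = |N|. -/
import Mathlib


open scoped Classical

variable {V : Type*}

/-- `IsWalk A u v l`: `u :: l` is a directed walk from `u` to `v` in the digraph with
arc relation `A`. -/
def IsWalk (A : V → V → Prop) (u v : V) (l : List V) : Prop :=
  List.Chain A u l ∧ (u :: l).getLast (List.cons_ne_nil u l) = v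

/-- The list of arcs of the walk `u :: l`. -/
def walkArcs (u : V) (l : List V) : List (V × V) := (u :: l).zip l

/-- The cost of a walk: the sum of the costs of its arcs. -/
noncomputable def walkCost (c : V → V → ℝ) (u : V) (l : List V) : ℝ :=
  ((walkArcs u l).map fun e => c e.1 e.2).sum

/-- A (simple) directed cycle through the arc `(x, y)`: the arc `(x, y)` together with a
walk from `y` back to `x` visiting pairwise distinct nodes. -/
def IsCycleThrough (A : V → V → Prop) (x y : V) (l : List V) : Prop :=
  A x y ∧ IsWalk A y x l ∧ (y :: l).Nodup

/-- The arcs of the cycle through `(x, y)` given by the return walk `y :: l`. -/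
def cycleArcs (x y : V) (l : List V) : List (V × V) := (x, y) :: walkArcs y l

/-- `G = (V, A, c)` is `ξ`-min-balanced: every arc lies on a directed cycle all of whose
arcs have cost at most `ξ` times the cost of the given arc. -/
def MinBalanced (A : V → V → Prop) (c : V → V → ℝ) (ξ : ℝ) : Prop :=
  ∀ x y, A x y → ∃ l, IsCycleThrough A x y l ∧
    ∀ f ∈ cycleArcs x y l, c f.1 f.2 ≤ ξ * c x y

/-- A digraph is strongly connected if there is a directed walk between any two nodes. -/
def StronglyConnected (A : V → V → Prop) : Prop := ∀ u v : V, ∃ l, IsWalk A u v l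

/-- The bottleneck cost `b(i,j)`: the least `t` such that there is a directed `i`–`j`
walk all of whose arcs have cost at most `t`. -/
noncomputable def bottleneck (A : V → V → Prop) (c : V → V → ℝ) (i j : V) : ℝ :=
  sInf {t | ∃ l, IsWalk A i j l ∧ ∀ f ∈ walkArcs i l, c f.1 f.2 ≤ t}

/-- The balance value `β(e)` of the arc `e = (x, y)`: the smallest `r` such that there is
a directed cycle through `e` all of whose arcs have cost at most `r`. -/
noncomputable def balanceValue (A : V → V → Prop) (c : V → V → ℝ) (x y : V) : ℝ :=
  sInf {r | ∃ l, IsCycleThrough A x y l ∧ ∀ f ∈ cycleArcs x y l, c f.1 f.2 ≤ r}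


lemma walkArcs_cons (u a : V) (t : List V) :
    walkArcs u (a :: t) = (u, a) :: walkArcs a t := rfl

lemma walkArcs_telescope (π : V → ℝ) : ∀ (l : List V) (u : V),
    ((walkArcs u l).map fun f => π f.1 - π f.2).sum
      = π u - π ((u :: l).getLast (List.cons_ne_nil u l))
  | [], u => by simp [walkArcs]
  | a :: t, u => by
    rw [walkArcs_cons, List.map_cons, List.sum_cons, walkArcs_telescope π t a,
      List.getLast_cons (List.cons_ne_nil a t)]
    ring

lemma chain_arcs (A : V → V → Prop) : ∀ (l : List V) (u : V), List.Chain A u l →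
    ∀ f ∈ walkArcs u l, A f.1 f.2
  | [], u, _, f, hf => by simp [walkArcs] at hf
  | a :: t, u, h, f, hf => by
    rw [walkArcs_cons] at hf
    rcases List.mem_cons.1 hf with rfl | hf
    · exact (List.chain_cons.1 h).1
    · exact chain_arcs A t a (List.chain_cons.1 h).2 f hf

lemma walkArcs_length (u : V) (l : List V) : (walkArcs u l).length = l.length := by
  simp [walkArcs]

/-- If `c` is a nonnegative `7n²`-min-balanced cost function on a
strongly connected digraph and `c^π` is any nonnegative reduced cost of `c`, then
`c^π(e) ≤ 7n³·c(e)` for every arc `e`, where `n = |N|`. -/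
theorem reduced_cost_upper_bound_of_rough_balance [Fintype V]
    (A : V → V → Prop) (c : V → V → ℝ) (hc : ∀ x y, A x y → 0 ≤ c x y)
    (hsc : StronglyConnected A)
    (hbal : MinBalanced A c (7 * (Fintype.card V : ℝ) ^ 2))
    (π : V → ℝ) (hπ : ∀ x y, A x y → 0 ≤ c x y + π x - π y) :
    ∀ x y, A x y → c x y + π x - π y ≤ 7 * (Fintype.card V : ℝ) ^ 3 * c x y := by
  intro x y hxy
  set n : ℝ := (Fintype.card V : ℝ) with hn
  obtain ⟨l, ⟨_, ⟨hchain, hlast⟩, hnodup⟩, hbound⟩ := hbal x y hxy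
  -- all arcs of the cycle are arcs of the graph
  have harc : ∀ f ∈ cycleArcs x y l, A f.1 f.2 := by
    intro f hf
    rcases List.mem_cons.1 hf with rfl | hf
    · exact hxy
    · exact chain_arcs A l y hchain f hf
  -- reduced costs sum over the cycle equals cost sum over the cycle
  have hsum : ((cycleArcs x y l).map fun f => c f.1 f.2 + π f.1 - π f.2).sum
      = ((cycleArcs x y l).map fun f => c f.1 f.2).sum := by
    have h1 : ((cycleArcs x y l).map fun f => c f.1 f.2 + π f.1 - π f.2).sum
        = ((cycleArcs x y l).map fun f => c f.1 f.2).sum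
          + ((cycleArcs x y l).map fun f => π f.1 - π f.2).sum := by
      rw [← List.sum_map_add]
      congr 1
      apply List.map_congr_left
      intro f _
      ring
    rw [h1]
    have h2 : ((cycleArcs x y l).map fun f => π f.1 - π f.2).sum = 0 := by
      simp only [cycleArcs, List.map_cons, List.sum_cons, walkArcs_telescope π l y, hlast]
      ring
    rw [h2, add_zero]
  -- the number of arcs of the cycle is at most n
  have hcard : ((cycleArcs x y l).length : ℝ) ≤ n := by
    have h := List.Nodup.length_le_card hnodup
    simp only [List.length_cons] at h
    simp only [cycleArcs, List.length_cons, walkArcs_length, hn]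
    exact_mod_cast h
  have hce : 0 ≤ c x y := hc x y hxy
  have hnpos : (0:ℝ) ≤ n := Nat.cast_nonneg _
  -- sum of costs over cycle ≤ length * 7n² c(x,y)
  have hsum_le : ((cycleArcs x y l).map fun f => c f.1 f.2).sum
      ≤ ((cycleArcs x y l).length : ℝ) * (7 * n ^ 2 * c x y) := by
    calc ((cycleArcs x y l).map fun f => c f.1 f.2).sum
        ≤ ((cycleArcs x y l).map fun _ => 7 * n ^ 2 * c x y).sum := by
          apply List.sum_le_sum
          intro f hf
          exact hbound f hf
      _ = ((cycleArcs x y l).length : ℝ) * (7 * n ^ 2 * c x y) := by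
          rw [List.map_const', List.sum_replicate, nsmul_eq_mul]
  -- reduced cost of (x,y) is at most the reduced-cost sum of the cycle
  have hhead : c x y + π x - π y ≤ ((cycleArcs x y l).map fun f => c f.1 f.2 + π f.1 - π f.2).sum := by
    simp only [cycleArcs, List.map_cons, List.sum_cons]
    have : 0 ≤ ((walkArcs y l).map fun f => c f.1 f.2 + π f.1 - π f.2).sum := by
      apply List.sum_nonneg
      intro t ht
      obtain ⟨f, hf, rfl⟩ := List.mem_map.1 ht
      exact hπ f.1 f.2 (chain_arcs A l y hchain f hf)
    linarith
  have h7 : (0:ℝ) ≤ 7 * n ^ 2 * c x y :=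
    mul_nonneg (mul_nonneg (by norm_num) (by positivity)) hce
  calc c x y + π x - π y ≤ ((cycleArcs x y l).map fun f => c f.1 f.2 + π f.1 - π f.2).sum := hhead
    _ = ((cycleArcs x y l).map fun f => c f.1 f.2).sum := hsum
    _ ≤ ((cycleArcs x y l).length : ℝ) * (7 * n ^ 2 * c x y) := hsum_le
    _ ≤ n * (7 * n ^ 2 * c x y) := mul_le_mul_of_nonneg_right hcard h7
    _ = 7 * n ^ 3 * c x y := by ring
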